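/- arXiv:1305.1233 — 2 statements merged into one kernel-verified Lean document; each statement's English description precedes it below -/
import Mathlib

section
/- Let κ₀, κ : (0,∞) → ℝ be continuous with κ(r)⁻ ≤ κ₀(r)⁻ + 2L for all r > 0 and κ(r)⁻ ≤ κ₀(r)⁻ for r > R, where L ≥ 0 and R ≥ 0. Let 0 < R₁ and define c⁻¹ = ∫₀^{R₁} ∫₀ˢ exp((1/4)∫ₜˢ u·κ(u)⁻ du) dt ds and c₀⁻¹ analogously with κ₀. If R ≤ R₁ and the κ₀-integrals are finite, then c ≥ c₀·exp(−L·R²/4). -/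
open MeasureTheory Set intervalIntegral

theorem contraction_rate_perturbation (κ κ₀ : ℝ → ℝ) (L R R₁ c c₀ : ℝ)
    (hL : 0 ≤ L) (hR : 0 ≤ R) (hR₁ : 0 < R₁) (hRR₁ : R ≤ R₁)
    (hκcont : ContinuousOn κ (Set.Ioi 0))
    (hκ₀cont : ContinuousOn κ₀ (Set.Ioi 0))
    (hle : ∀ r, 0 < r → max (-κ r) 0 ≤ max (-κ₀ r) 0 + 2 * L)
    (hleR : ∀ r, R < r → max (-κ r) 0 ≤ max (-κ₀ r) 0)
    (hint : MeasureTheory.IntegrableOn (fun u => u * max (-κ u) 0) (Set.Ioc (0:ℝ) R₁))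
    (hint₀ : MeasureTheory.IntegrableOn (fun u => u * max (-κ₀ u) 0) (Set.Ioc (0:ℝ) R₁))
    (houter : IntervalIntegrable (fun s => ∫ t in (0:ℝ)..s,
        Real.exp ((1/4) * ∫ u in t..s, u * max (-κ u) 0)) MeasureTheory.volume 0 R₁)
    (houter₀ : IntervalIntegrable (fun s => ∫ t in (0:ℝ)..s,
        Real.exp ((1/4) * ∫ u in t..s, u * max (-κ₀ u) 0)) MeasureTheory.volume 0 R₁)
    (hc : c = 1 / ∫ s in (0:ℝ)..R₁, ∫ t in (0:ℝ)..s,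
        Real.exp ((1/4) * ∫ u in t..s, u * max (-κ u) 0))
    (hc₀ : c₀ = 1 / ∫ s in (0:ℝ)..R₁, ∫ t in (0:ℝ)..s,
        Real.exp ((1/4) * ∫ u in t..s, u * max (-κ₀ u) 0)) :
    c₀ * Real.exp (-(L * R ^ 2) / 4) ≤ c := by
  set f : ℝ → ℝ := fun u => u * max (-κ u) 0 with hf
  set f₀ : ℝ → ℝ := fun u => u * max (-κ₀ u) 0 with hf₀
  set K : ℝ := Real.exp (L * R ^ 2 / 4) with hK
  have hKpos : 0 < K := Real.exp_pos _
  -- the auxiliary dominating function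
  set h : ℝ → ℝ := Set.indicator (Set.Iic R) (fun u => 2 * L * u) with hh
  have hhi : IntegrableOn h (Set.Ioc (0:ℝ) R₁) := by
    exact ((continuous_const.mul continuous_id).integrableOn_Ioc).indicator measurableSet_Iic
  have hhint : ∫ u in Set.Ioc (0:ℝ) R₁, h u = L * R ^ 2 := by
    rw [hh]
    rw [setIntegral_indicator measurableSet_Iic]
    have : Set.Ioc (0:ℝ) R₁ ∩ Set.Iic R = Set.Ioc 0 R := by
      rw [Set.Ioc_inter_Iic, min_eq_right hRR₁]
    rw [this, ← intervalIntegral.integral_of_le hR]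
    rw [intervalIntegral.integral_const_mul, integral_id]
    ring
  -- key integral estimate
  have key : ∀ t s : ℝ, 0 ≤ t → t ≤ s → s ≤ R₁ →
      (∫ u in t..s, f u) ≤ (∫ u in t..s, f₀ u) + L * R ^ 2 := by
    intro t s ht hts hsR₁
    have hsub : Set.Ioc t s ⊆ Set.Ioc (0:ℝ) R₁ := Set.Ioc_subset_Ioc ht hsR₁
    have hfi : IntervalIntegrable f volume t s :=
      (intervalIntegrable_iff_integrableOn_Ioc_of_le hts).2 (hint.mono_set hsub)
    have hf₀i : IntervalIntegrable f₀ volume t s :=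
      (intervalIntegrable_iff_integrableOn_Ioc_of_le hts).2 (hint₀.mono_set hsub)
    have hhi' : IntervalIntegrable h volume t s :=
      (intervalIntegrable_iff_integrableOn_Ioc_of_le hts).2 (hhi.mono_set hsub)
    have step1 : (∫ u in t..s, f u) ≤ ∫ u in t..s, (f₀ u + h u) := by
      apply intervalIntegral.integral_mono_on hts hfi (hf₀i.add hhi')
      intro u hu
      rcases eq_or_lt_of_le (ht.trans hu.1) with h0 | h0
      · simp [hf, hf₀, hh, ← h0, Set.indicator_apply]
      · rcases le_or_gt u R with huR | huR
        · have : h u = 2 * L * u := Set.indicator_of_mem (Set.mem_Iic.2 huR) _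
          rw [this]
          have := hle u h0
          calc f u ≤ u * (max (-κ₀ u) 0 + 2 * L) :=
                mul_le_mul_of_nonneg_left (hle u h0) h0.le
            _ = f₀ u + 2 * L * u := by ring
        · have : h u = 0 := Set.indicator_of_notMem (by simp [huR.not_ge]) _
          rw [this, add_zero]
          exact mul_le_mul_of_nonneg_left (hleR u huR) h0.le
    have step2 : (∫ u in t..s, h u) ≤ L * R ^ 2 := by
      rw [intervalIntegral.integral_of_le hts, ← hhint]
      apply setIntegral_mono_set hhi
      · filter_upwards [ae_restrict_mem measurableSet_Ioc] with u hu
        simp only [Pi.zero_apply, hh, Set.indicator_apply]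
        split
        · have := hu.1; positivity
        · exact le_refl 0
      · exact HasSubset.Subset.eventuallyLE hsub
    calc (∫ u in t..s, f u) ≤ ∫ u in t..s, (f₀ u + h u) := step1
      _ = (∫ u in t..s, f₀ u) + ∫ u in t..s, h u :=
          intervalIntegral.integral_add hf₀i hhi'
      _ ≤ (∫ u in t..s, f₀ u) + L * R ^ 2 := by linarith [step2]
  -- integrability of inner integrands
  have innerInt : ∀ (g : ℝ → ℝ), IntegrableOn g (Set.Ioc (0:ℝ) R₁) →
      ∀ s ∈ Set.Icc (0:ℝ) R₁,
      IntervalIntegrable (fun t => Real.exp ((1/4) * ∫ u in t..s, g u)) volume 0 s := by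
    intro g hg s hs
    have hIcc : IntegrableOn g (Set.uIcc 0 s) := by
      rw [Set.uIcc_of_le hs.1, integrableOn_Icc_iff_integrableOn_Ioc]
      exact hg.mono_set (Set.Ioc_subset_Ioc le_rfl hs.2)
    have hcont : ContinuousOn (fun t => Real.exp ((1/4) * ∫ u in t..s, g u))
        (Set.uIcc 0 s) := by
      exact Real.continuous_exp.comp_continuousOn
        (continuousOn_const.mul (intervalIntegral.continuousOn_primitive_interval_left hIcc))
    exact hcont.intervalIntegrable
  -- inner integrand ≥ 1
  have innerGe : ∀ (g : ℝ → ℝ), (∀ u, 0 ≤ u → 0 ≤ g u) → ∀ s ∈ Set.Icc (0:ℝ) R₁,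
      ∀ t ∈ Set.Icc (0:ℝ) s, (1:ℝ) ≤ Real.exp ((1/4) * ∫ u in t..s, g u) := by
    intro g hg s hs t ht
    rw [Real.one_le_exp_iff]
    have : 0 ≤ ∫ u in t..s, g u :=
      intervalIntegral.integral_nonneg ht.2 (fun u hu => hg u (ht.1.trans hu.1))
    positivity
  have hfnn : ∀ u : ℝ, 0 ≤ u → 0 ≤ f u := fun u hu => by positivity
  have hf₀nn : ∀ u : ℝ, 0 ≤ u → 0 ≤ f₀ u := fun u hu => by positivity
  -- lower bound on inner integrals
  have innerLB : ∀ (g : ℝ → ℝ), IntegrableOn g (Set.Ioc (0:ℝ) R₁) →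
      (∀ u, 0 ≤ u → 0 ≤ g u) → ∀ s ∈ Set.Icc (0:ℝ) R₁,
      s ≤ ∫ t in (0:ℝ)..s, Real.exp ((1/4) * ∫ u in t..s, g u) := by
    intro g hgi hgn s hs
    calc s = ∫ t in (0:ℝ)..s, (1:ℝ) := by simp
      _ ≤ ∫ t in (0:ℝ)..s, Real.exp ((1/4) * ∫ u in t..s, g u) :=
        intervalIntegral.integral_mono_on hs.1 intervalIntegrable_const
          (innerInt g hgi s hs) (innerGe g hgn s hs)
  -- lower bound on outer integrals
  have outerLB : ∀ (g : ℝ → ℝ), IntegrableOn g (Set.Ioc (0:ℝ) R₁) →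
      (∀ u, 0 ≤ u → 0 ≤ g u) →
      IntervalIntegrable (fun s => ∫ t in (0:ℝ)..s,
        Real.exp ((1/4) * ∫ u in t..s, g u)) volume 0 R₁ →
      R₁ ^ 2 / 2 ≤ ∫ s in (0:ℝ)..R₁, ∫ t in (0:ℝ)..s,
        Real.exp ((1/4) * ∫ u in t..s, g u) := by
    intro g hgi hgn hout
    calc R₁ ^ 2 / 2 = ∫ s in (0:ℝ)..R₁, s := by rw [integral_id]; ring
      _ ≤ _ := intervalIntegral.integral_mono_on hR₁.le
          (intervalIntegral.intervalIntegrable_id) hout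
          (fun s hs => innerLB g hgi hgn s hs)
  have hI₀pos : 0 < ∫ s in (0:ℝ)..R₁, ∫ t in (0:ℝ)..s,
      Real.exp ((1/4) * ∫ u in t..s, f₀ u) := by
    have := outerLB f₀ hint₀ hf₀nn houter₀
    nlinarith
  have hIpos : 0 < ∫ s in (0:ℝ)..R₁, ∫ t in (0:ℝ)..s,
      Real.exp ((1/4) * ∫ u in t..s, f u) := by
    have := outerLB f hint hfnn houter
    nlinarith
  -- main comparison
  have inner_cmp : ∀ s ∈ Set.Icc (0:ℝ) R₁,
      (∫ t in (0:ℝ)..s, Real.exp ((1/4) * ∫ u in t..s, f u)) ≤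
      K * ∫ t in (0:ℝ)..s, Real.exp ((1/4) * ∫ u in t..s, f₀ u) := by
    intro s hs
    rw [← intervalIntegral.integral_const_mul]
    apply intervalIntegral.integral_mono_on hs.1 (innerInt f hint s hs)
      ((innerInt f₀ hint₀ s hs).const_mul K)
    intro t ht
    have hkey := key t s ht.1 ht.2 hs.2
    rw [hK, ← Real.exp_add]
    apply Real.exp_le_exp.2
    nlinarith
  have main : (∫ s in (0:ℝ)..R₁, ∫ t in (0:ℝ)..s, Real.exp ((1/4) * ∫ u in t..s, f u)) ≤
      K * ∫ s in (0:ℝ)..R₁, ∫ t in (0:ℝ)..s, Real.exp ((1/4) * ∫ u in t..s, f₀ u) := by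
    rw [← intervalIntegral.integral_const_mul]
    exact intervalIntegral.integral_mono_on hR₁.le houter (houter₀.const_mul K) inner_cmp
  -- conclude
  rw [hc, hc₀]
  have hexp : Real.exp (-(L * R ^ 2) / 4) = K⁻¹ := by
    rw [hK, ← Real.exp_neg]; ring_nf
  rw [hexp]
  rw [div_mul_eq_mul_div, one_mul, div_le_div_iff₀ (by positivity) hIpos]
  calc K⁻¹ * (∫ s in (0:ℝ)..R₁, ∫ t in (0:ℝ)..s, Real.exp ((1/4) * ∫ u in t..s, f u))
      ≤ K⁻¹ * (K * ∫ s in (0:ℝ)..R₁, ∫ t in (0:ℝ)..s,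
          Real.exp ((1/4) * ∫ u in t..s, f₀ u)) := by
        apply mul_le_mul_of_nonneg_left main (by positivity)
    _ = ∫ s in (0:ℝ)..R₁, ∫ t in (0:ℝ)..s, Real.exp ((1/4) * ∫ u in t..s, f₀ u) := by
        field_simp
    _ = 1 * ∫ s in (0:ℝ)..R₁, ∫ t in (0:ℝ)..s, Real.exp ((1/4) * ∫ u in t..s, f₀ u) := by
        ring
end

section
/- For d ≥ 1 and real vectors x = (x¹,…,x^{d−1}) ∈ ℝ^{d−1}, with the convention x⁰ = x^d = 0, the discrete Poincaré inequality holds: ∑_{i=1}^{d} |xⁱ − x^{i−1}|² ≥ 2·(1 − cos(π/d))·∑_{i=1}^{d−1} |xⁱ|². -/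
theorem discrete_poincare (d : ℕ) (hd : 1 ≤ d) (x : ℕ → ℝ)
    (h0 : x 0 = 0) (hdd : x d = 0) :
    2 * (1 - Real.cos (Real.pi / d)) * ∑ i ∈ Finset.Ico 1 d, (x i) ^ 2
      ≤ ∑ i ∈ Finset.range d, (x (i + 1) - x i) ^ 2 := by
  -- handle d = 1
  rcases Nat.lt_or_ge d 2 with hd1 | hd2
  · interval_cases d
    simp [h0] at hdd ⊢
    simp [hdd, h0]
  obtain ⟨e, rfl⟩ : ∃ e, d = e + 2 := ⟨d - 2, by omega⟩
  set d := e + 2 with hdef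
  set θ := Real.pi / d with hθ
  have hdpos : (0:ℝ) < d := by positivity
  have hθpos : 0 < θ := by positivity
  set s : ℕ → ℝ := fun j => Real.sin (j * θ) with hs
  have hs0 : s 0 = 0 := by simp [hs]
  have hsd : s d = 0 := by
    have : (d:ℝ) * θ = Real.pi := by
      rw [hθ]; field_simp
    simp [hs, this]
  have hspos : ∀ j : ℕ, 1 ≤ j → j < d → 0 < s j := by
    intro j h1 h2
    apply Real.sin_pos_of_pos_of_lt_pi
    · have : (1:ℝ) ≤ j := by exact_mod_cast h1
      nlinarith
    · have hj : (j:ℝ) < d := by exact_mod_cast h2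
      calc (j:ℝ) * θ < d * θ := by nlinarith
        _ = Real.pi := by rw [hθ]; field_simp
  have hrec : ∀ j : ℕ, 1 ≤ j → s (j+1) + s (j-1) = 2 * Real.cos θ * s j := by
    intro j h1
    obtain ⟨k, rfl⟩ : ∃ k, j = k + 1 := ⟨j - 1, by omega⟩
    simp only [hs, Nat.add_sub_cancel]
    push_cast
    rw [show ((k:ℝ) + 1 + 1) * θ = ((k:ℝ)+1)*θ + θ by ring,
        show ((k:ℝ)) * θ = ((k:ℝ)+1)*θ - θ by ring,
        Real.sin_add, Real.sin_sub]
    ring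
  set S := ∑ i ∈ Finset.Ico 1 d, (x i) ^ 2 with hS
  set C := ∑ i ∈ Finset.range d, x i * x (i + 1) with hC
  -- Step A
  have hA : ∑ i ∈ Finset.range d, (x (i+1) - x i)^2 = 2 * S - 2 * C := by
    have expand : ∀ i, (x (i+1) - x i)^2 = x (i+1)^2 + x i^2 - 2 * (x i * x (i+1)) := by
      intro i; ring
    rw [Finset.sum_congr rfl (fun i _ => expand i)]
    rw [Finset.sum_sub_distrib, Finset.sum_add_distrib, ← Finset.mul_sum]
    have h1 : ∑ i ∈ Finset.range d, x (i+1)^2 = S := by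
      have : ∑ i ∈ Finset.Ico 1 (d+1), x i ^2 = ∑ i ∈ Finset.range d, x (1+i)^2 :=
        Finset.sum_Ico_eq_sum_range (f := fun i => x i ^ 2) (m := 1) (n := d+1) |>.trans (by
          norm_num)
      rw [Finset.sum_Ico_succ_top (by omega), ← hS] at this
      simp only [hdd] at this
      rw [show ∑ i ∈ Finset.range d, x (i+1)^2 = ∑ i ∈ Finset.range d, x (1+i)^2 by
        apply Finset.sum_congr rfl; intro i _; rw [Nat.add_comm]]
      linarith
    have h2 : ∑ i ∈ Finset.range d, x i ^2 = S := by
      rw [Finset.range_eq_Ico, Finset.sum_eq_sum_Ico_succ_bot (by omega), h0, hS]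
      norm_num
    rw [h1, h2]; ring
  -- Step B
  have hB : C ≤ Real.cos θ * S := by
    -- drop the last term of C
    have hCeq : C = ∑ i ∈ Finset.range (d-1), x i * x (i+1) := by
      rw [hC, show d = (d-1) + 1 by omega, Finset.sum_range_succ,
          show (d-1) + 1 = d by omega, hdd]
      simp
    set A : ℕ → ℝ := fun i => s (i+1) / (2 * s i) * x i ^ 2 with hA'
    set B : ℕ → ℝ := fun i => s (i-1) / (2 * s i) * x i ^ 2 with hB'
    have step1 : ∑ i ∈ Finset.range (d-1), x i * x (i+1)
        ≤ ∑ i ∈ Finset.range (d-1), (A i + B (i+1)) := by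
      apply Finset.sum_le_sum
      intro i hi
      rcases Nat.eq_zero_or_pos i with rfl | hi1
      · simp [hA', hB', h0, hs0]
      · have hi2 : i < d - 1 := Finset.mem_range.mp hi
        have ha : 0 < s i := hspos i hi1 (by omega)
        have hb : 0 < s (i+1) := hspos (i+1) (by omega) (by omega)
        have key : A i + B (i+1) - x i * x (i+1)
            = (s (i+1) * x i - s i * x (i+1))^2 / (2 * s i * s (i+1)) := by
          simp only [hA', hB', Nat.add_sub_cancel]
          field_simp
          ring
        nlinarith [div_nonneg (sq_nonneg (s (i+1) * x i - s i * x (i+1)))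
          (by positivity : (0:ℝ) ≤ 2 * s i * s (i+1))]
    have sumA : ∑ i ∈ Finset.range (d-1), A i = ∑ i ∈ Finset.Ico 1 d, A i := by
      rw [Finset.range_eq_Ico, Finset.sum_eq_sum_Ico_succ_bot (by omega : 0 < d - 1)]
      have hA0 : A 0 = 0 := by simp [hA', h0]
      have : ∑ i ∈ Finset.Ico 1 d, A i
          = ∑ i ∈ Finset.Ico 1 (d-1), A i + A (d-1) := by
        rw [show d = (d-1)+1 by omega, show (d-1)+1-1 = d-1 by omega,
            Finset.sum_Ico_succ_top (by omega)]
      have hAd : A (d-1) = 0 := by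
        simp only [hA', show d - 1 + 1 = d by omega, hsd]
        simp
      rw [this, hA0, hAd]; ring
    have sumB : ∑ i ∈ Finset.range (d-1), B (i+1) = ∑ i ∈ Finset.Ico 1 d, B i := by
      rw [Finset.sum_Ico_eq_sum_range]
      apply Finset.sum_congr rfl
      intro i _
      rw [Nat.add_comm]
    have combine : ∀ i ∈ Finset.Ico 1 d, A i + B i = Real.cos θ * x i ^ 2 := by
      intro i hi
      obtain ⟨hi1, hi2⟩ := Finset.mem_Ico.mp hi
      have ha : 0 < s i := hspos i hi1 hi2
      have hr := hrec i hi1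
      simp only [hA', hB']
      rw [div_mul_eq_mul_div, div_mul_eq_mul_div, ← add_div,
          div_eq_iff (by positivity : (2:ℝ) * s i ≠ 0)]
      nlinarith [hr]
    calc C = ∑ i ∈ Finset.range (d-1), x i * x (i+1) := hCeq
      _ ≤ ∑ i ∈ Finset.range (d-1), (A i + B (i+1)) := step1
      _ = ∑ i ∈ Finset.Ico 1 d, (A i + B i) := by
          rw [Finset.sum_add_distrib, sumA, sumB, ← Finset.sum_add_distrib]
      _ = ∑ i ∈ Finset.Ico 1 d, Real.cos θ * x i ^ 2 := Finset.sum_congr rfl combine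
      _ = Real.cos θ * S := by rw [hS, Finset.mul_sum]
  rw [hA]
  linarith
end
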